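/- For a homogeneous polynomial P ∈ ℤ[x₁,…,x_k], the equation P(x₁,…,x_k) = 0 is partition regular on ℕ if and only if every multiplicatively piecewise syndetic set A ⊆ ℕ contains elements a₁,…,a_k ∈ A with P(a₁,…,a_k) = 0. -/
import Mathlib


def MulThick (T : Set ℕ) : Prop :=
  ∀ F : Finset ℕ, (∀ f ∈ F, 0 < f) → ∃ x : ℕ, 0 < x ∧ ∀ f ∈ F, x * f ∈ T

def MulSyndetic (A : Set ℕ) : Prop :=
  ∃ k : ℕ, 0 < k ∧ ∀ x : ℕ, 0 < x → ∃ i : ℕ, 1 ≤ i ∧ i ≤ k ∧ x * i ∈ A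

def MulPiecewiseSyndetic (A : Set ℕ) : Prop :=
  ∃ S T : Set ℕ, MulSyndetic S ∧ MulThick T ∧ A = S ∩ T

/-- The equation `P(x₁,…,x_k) = 0` is partition regular on the positive integers:
every finite coloring admits a monochromatic solution. -/
def EqPartitionRegular {k : ℕ} (P : MvPolynomial (Fin k) ℤ) : Prop :=
  ∀ r : ℕ, ∀ C : ℕ → Fin r, ∃ a : Fin k → ℕ, (∀ i, 0 < a i) ∧
    (∃ c : Fin r, ∀ i, C (a i) = c) ∧
    MvPolynomial.eval (fun i => (a i : ℤ)) P = 0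

/-- The set of dilation centers hitting `B` within ratio at most `m`. -/
def USet (B : Set ℕ) (m : ℕ) : Set ℕ := {x | 0 < x ∧ ∃ i, 1 ≤ i ∧ i ≤ m ∧ x * i ∈ B}

open MvPolynomial in
lemma eval_dilate {k ℓ : ℕ} (P : MvPolynomial (Fin k) ℤ) (h : P.IsHomogeneous ℓ)
    (m : ℤ) (v : Fin k → ℤ) :
    eval (fun i => m * v i) P = m ^ ℓ * eval v P := by
  rw [eval_eq', eval_eq', Finset.mul_sum]
  apply Finset.sum_congr rfl
  intro d hd
  have hdeg : ∑ i, d i = ℓ := by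
    have := h (mem_support_iff.mp hd)
    rw [← this]
    simp [Finsupp.weight_apply, Finsupp.sum_fintype]
  rw [← hdeg]
  simp only [mul_pow, Finset.prod_mul_distrib, Finset.prod_pow_eq_pow_sum]
  ring

/-- In any finite covering of a multiplicatively thick set, some cell has a thick
set of approximate dilation centers. -/
lemma part_lemma : ∀ (n : ℕ) (A : Fin n → Set ℕ) (T : Set ℕ), MulThick T →
    (T ⊆ ⋃ c, A c) → ∃ (c : Fin n) (m : ℕ), 0 < m ∧ MulThick (USet (A c) m) := by
  intro n
  induction n with
  | zero =>
    intro A T hT hsub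
    obtain ⟨x, hx, hxf⟩ := hT {1} (by simp)
    have := hsub (hxf 1 (by simp))
    simp at this
  | succ n ih =>
    intro A T hT hsub
    by_cases hX : MulThick (⋃ c : Fin n, A c.castSucc)
    · obtain ⟨c, m, hm, h⟩ := ih (fun c => A c.castSucc) _ hX subset_rfl
      exact ⟨c.castSucc, m, hm, h⟩
    · simp only [MulThick, not_forall, not_exists, not_and] at hX
      obtain ⟨F, hFpos, hF⟩ := hX
      have hFne : ∃ f, f ∈ F := by
        obtain ⟨f, hf, -⟩ := hF 1 one_pos
        exact ⟨f, hf⟩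
      obtain ⟨f0, hf0⟩ := hFne
      refine ⟨Fin.last n, F.sup id, lt_of_lt_of_le (hFpos f0 hf0) (Finset.le_sup (f := id) hf0), ?_⟩
      intro G hG
      obtain ⟨x, hx, hxT⟩ := hT ((G ×ˢ F).image fun p => p.1 * p.2) (by
        intro g hg
        simp only [Finset.mem_image, Finset.mem_product] at hg
        obtain ⟨⟨a, b⟩, ⟨ha, hb⟩, rfl⟩ := hg
        exact Nat.mul_pos (hG a ha) (hFpos b hb))
      refine ⟨x, hx, ?_⟩
      intro g hg
      obtain ⟨f, hfF, hfnot⟩ := hF (x * g) (Nat.mul_pos hx (hG g hg))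
      have hT' : x * g * f ∈ T := by
        have := hxT (g * f) (by
          simp only [Finset.mem_image, Finset.mem_product]
          exact ⟨⟨g, f⟩, ⟨hg, hfF⟩, rfl⟩)
        rwa [← mul_assoc] at this
      have := hsub hT'
      simp only [Set.mem_iUnion] at this
      obtain ⟨c, hc⟩ := this
      rcases Fin.eq_castSucc_or_eq_last c with ⟨c', rfl⟩ | rfl
      · exact absurd (Set.mem_iUnion.mpr ⟨c', hc⟩) hfnot
      · exact ⟨Nat.mul_pos hx (hG g hg), f, hFpos f hfF, Finset.le_sup (f := id) hfF, hc⟩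

/-- If the dilation-center set of `B` is thick, there is a piecewise syndetic
configuration inside `B`. -/
lemma ps_of_U {B : Set ℕ} {m : ℕ} (hm : 0 < m) (hU : MulThick (USet B m)) :
    ∃ S T : Set ℕ, MulSyndetic S ∧ MulThick T ∧ S ∩ T ⊆ B := by
  have hchoice : ∀ n : ℕ, ∃ x : ℕ, 0 < x ∧ ∀ f ∈ Finset.Icc 1 n, x * f ∈ USet B m := by
    intro n
    exact hU (Finset.Icc 1 n) (fun f hf => (Finset.mem_Icc.mp hf).1)
  choose x hx hxm using hchoice
  set T : Set ℕ := {y | ∃ n j, 1 ≤ j ∧ j ≤ n ∧ y = x n * j} with hTdef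
  have hTU : T ⊆ USet B m := by
    rintro y ⟨n, j, hj1, hjn, rfl⟩
    exact hxm n j (Finset.mem_Icc.mpr ⟨hj1, hjn⟩)
  have hTthick : MulThick T := by
    intro F hF
    refine ⟨x (F.sup id), hx _, ?_⟩
    intro f hf
    exact ⟨F.sup id, f, hF f hf, Finset.le_sup (f := id) hf, rfl⟩
  refine ⟨B ∪ Tᶜ, T, ⟨m, hm, ?_⟩, hTthick, ?_⟩
  · intro y hy
    by_cases hyT : y ∈ T
    · obtain ⟨-, i, hi1, him, hiB⟩ := hTU hyT
      exact ⟨i, hi1, him, Or.inl hiB⟩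
    · exact ⟨1, le_refl 1, hm, by simpa using Or.inr hyT⟩
  · rintro y ⟨hyS, hyT⟩
    rcases hyS with h | h
    · exact h
    · exact absurd hyT h

open MvPolynomial in
/-- Compactness: partition regularity yields solutions confined to an initial segment. -/
lemma compactness {k : ℕ} (P : MvPolynomial (Fin k) ℤ) (hreg : EqPartitionRegular P)
    (r : ℕ) :
    ∃ N : ℕ, ∀ χ : ℕ → Fin r, ∃ a : Fin k → ℕ, (∀ i, 0 < a i ∧ a i ≤ N) ∧
      (∃ c : Fin r, ∀ i, χ (a i) = c) ∧ eval (fun i => (a i : ℤ)) P = 0 := by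
  by_contra hcon
  push_neg at hcon
  choose χ hχ using hcon
  set U : Ultrafilter ℕ := Ultrafilter.of (Filter.cofinite : Filter ℕ) with hUdef
  have hUco : ∀ s : Set ℕ, s ∈ (Filter.cofinite : Filter ℕ) → s ∈ U := fun s hs =>
    (Ultrafilter.of_le Filter.cofinite) hs
  have hL : ∀ n : ℕ, ∃ c : Fin r, {N | χ N n = c} ∈ U := by
    intro n
    by_contra h
    push_neg at h
    have hmem : (⋂ c : Fin r, {N | χ N n = c}ᶜ) ∈ U :=
      Filter.iInter_mem.mpr fun c => Ultrafilter.compl_mem_iff_notMem.mpr (h c)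
    have hemp : (⋂ c : Fin r, {N | χ N n = c}ᶜ) = ∅ := by
      ext N
      simp only [Set.mem_iInter, Set.mem_compl_iff, Set.mem_setOf_eq,
        Set.mem_empty_iff_false, iff_false, not_forall, not_not]
      exact ⟨χ N n, rfl⟩
    rw [hemp] at hmem
    exact Filter.empty_notMem (U : Filter ℕ) hmem
  choose L hLmem using hL
  obtain ⟨a, hapos, ⟨c, hc⟩, heval⟩ := hreg r L
  have hbig : {N | ∀ i, a i ≤ N} ∈ U := by
    apply hUco
    rw [Filter.mem_cofinite]
    apply Set.Finite.subset (Set.finite_Iio (Finset.univ.sup a))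
    intro N hN
    simp only [Set.mem_compl_iff, Set.mem_setOf_eq, not_forall] at hN
    obtain ⟨i, hi⟩ := hN
    exact lt_of_lt_of_le (not_le.mp hi) (Finset.le_sup (Finset.mem_univ i))
  have hint : ((⋂ i, {N | χ N (a i) = L (a i)}) ∩ {N | ∀ i, a i ≤ N}) ∈ U :=
    Filter.inter_mem (Filter.iInter_mem.mpr fun i => hLmem (a i)) hbig
  obtain ⟨N, hN1, hN2⟩ := Ultrafilter.nonempty_of_mem hint
  simp only [Set.mem_iInter, Set.mem_setOf_eq] at hN1 hN2
  exact hχ N a (fun i => ⟨hapos i, hN2 i⟩) ⟨c, fun i => by rw [hN1 i, hc i]⟩ heval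

theorem eqPartitionRegular_iff_solutions_in_mulPS
    {k ℓ : ℕ} (P : MvPolynomial (Fin k) ℤ) (hhom : P.IsHomogeneous ℓ) :
    EqPartitionRegular P ↔
      ∀ A : Set ℕ, MulPiecewiseSyndetic A →
        ∃ a : Fin k → ℕ, (∀ i, 0 < a i ∧ a i ∈ A) ∧
          MvPolynomial.eval (fun i => (a i : ℤ)) P = 0 := by
  constructor
  · intro hreg A hA
    obtain ⟨S, T, ⟨k₀, hk₀, hS⟩, hT, rfl⟩ := hA
    have hW : MulThick (USet (S ∩ T) k₀) := by
      intro F hF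
      obtain ⟨x, hx, hxT⟩ := hT ((F ×ˢ Finset.Icc 1 k₀).image fun p => p.1 * p.2) (by
        intro g hg
        simp only [Finset.mem_image, Finset.mem_product, Finset.mem_Icc] at hg
        obtain ⟨⟨a, b⟩, ⟨ha, hb⟩, rfl⟩ := hg
        exact Nat.mul_pos (hF a ha) hb.1)
      refine ⟨x, hx, fun f hf => ⟨Nat.mul_pos hx (hF f hf), ?_⟩⟩
      obtain ⟨i, hi1, hik, hiS⟩ := hS (x * f) (Nat.mul_pos hx (hF f hf))
      refine ⟨i, hi1, hik, hiS, ?_⟩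
      have := hxT (f * i) (by
        simp only [Finset.mem_image, Finset.mem_product, Finset.mem_Icc]
        exact ⟨⟨f, i⟩, ⟨hf, hi1, hik⟩, rfl⟩)
      rwa [← mul_assoc] at this
    obtain ⟨N, hN⟩ := compactness P hreg k₀
    obtain ⟨x, hx, hxW⟩ := hW (Finset.Icc 1 N) (fun f hf => (Finset.mem_Icc.mp hf).1)
    classical
    set j : ℕ → ℕ := fun n =>
      if h : ∃ i, 1 ≤ i ∧ i ≤ k₀ ∧ x * n * i ∈ S ∩ T then h.choose else 1 with hjdef
    set χ : ℕ → Fin k₀ := fun n => ⟨min (j n - 1) (k₀ - 1), by omega⟩ with hχdef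
    obtain ⟨a, hab, ⟨c, hc⟩, heval⟩ := hN χ
    have hex : ∀ i : Fin k, ∃ t, 1 ≤ t ∧ t ≤ k₀ ∧ x * (a i) * t ∈ S ∩ T := by
      intro i
      obtain ⟨-, t, h1, h2, h3⟩ := hxW (a i) (Finset.mem_Icc.mpr ⟨(hab i).1, (hab i).2⟩)
      exact ⟨t, h1, h2, h3⟩
    have hj : ∀ i : Fin k, 1 ≤ j (a i) ∧ j (a i) ≤ k₀ ∧ x * (a i) * j (a i) ∈ S ∩ T := by
      intro i
      simp only [hjdef]
      rw [dif_pos (hex i)]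
      exact (hex i).choose_spec
    have hjc : ∀ i : Fin k, j (a i) = c.1 + 1 := by
      intro i
      have h1 := hc i
      rw [hχdef] at h1
      have h2 := (hj i).1
      have h3 := (hj i).2.1
      have h4 : min (j (a i) - 1) (k₀ - 1) = c.1 := congrArg Fin.val h1
      have h5 := c.2
      omega
    refine ⟨fun i => x * (c.1 + 1) * a i, ?_, ?_⟩
    · intro i
      refine ⟨Nat.mul_pos (Nat.mul_pos hx (Nat.succ_pos _)) (hab i).1, ?_⟩
      have h6 := (hj i).2.2
      rw [hjc i] at h6
      have h7 : x * (c.1 + 1) * a i = x * a i * (c.1 + 1) := by ring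
      show x * (c.1 + 1) * a i ∈ S ∩ T
      rwa [h7]
    · have h8 : (fun i => ((x * (c.1 + 1) * a i : ℕ) : ℤ)) =
          fun i => ((x * (c.1 + 1) : ℕ) : ℤ) * ((a i : ℕ) : ℤ) := by
        funext i; push_cast; ring
      rw [h8, eval_dilate P hhom, heval, mul_zero]
  · intro hsol r C
    obtain ⟨c, m, hm, hU⟩ := part_lemma r (fun c => {n | C n = c}) Set.univ
      (fun F hF => ⟨1, one_pos, fun f _ => Set.mem_univ _⟩)
      (fun n _ => Set.mem_iUnion.mpr ⟨C n, rfl⟩)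
    obtain ⟨S, T, hS, hT, hsub⟩ := ps_of_U hm hU
    obtain ⟨a, h1, heval⟩ := hsol (S ∩ T) ⟨S, T, hS, hT, rfl⟩
    exact ⟨a, fun i => (h1 i).1, ⟨c, fun i => hsub (h1 i).2⟩, heval⟩
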